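/- Let Θ be a Hermitian almost complex structure on V (Θ² = -id, Θ* = -Θ) and let R_Θ(x,y)z = ⟨Θy,z⟩Θx - ⟨Θx,z⟩Θy - 2⟨Θx,y⟩Θz. Then for x ⊥ y, the associated Jacobi operators commute: J(x)J(y) = J(y)J(x). Hence R_Θ is Jacobi-Tsankov. -/
import Mathlib


open scoped InnerProductSpace
noncomputable section

variable {V : Type*} [NormedAddCommGroup V] [InnerProductSpace ℝ V]

/-- `R` satisfies the symmetries of an algebraic curvature tensor. -/
def IsCurvatureOperator (R : V →ₗ[ℝ] V →ₗ[ℝ] V →ₗ[ℝ] V) : Prop :=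
  (∀ x y z w : V, ⟪R x y z, w⟫_ℝ = ⟪R z w x, y⟫_ℝ) ∧
  (∀ x y z w : V, ⟪R x y z, w⟫_ℝ = - ⟪R y x z, w⟫_ℝ) ∧
  (∀ x y z w : V, ⟪R x y z, w⟫_ℝ + ⟪R y z x, w⟫_ℝ + ⟪R z x y, w⟫_ℝ = 0)

/-- The Jacobi operator `J(x) : y ↦ R(y,x)x`. -/
def Jacobi (R : V →ₗ[ℝ] V →ₗ[ℝ] V →ₗ[ℝ] V) (x : V) : V →ₗ[ℝ] V where
  toFun y := R y x x
  map_add' a b := by simp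
  map_smul' c a := by simp

/-- The polarized Jacobi operator `J(x,y) : z ↦ ½R(z,x)y + ½R(z,y)x`. -/
def JacobiP (R : V →ₗ[ℝ] V →ₗ[ℝ] V →ₗ[ℝ] V) (x y : V) : V →ₗ[ℝ] V where
  toFun z := (1/2 : ℝ) • R z x y + (1/2 : ℝ) • R z y x
  map_add' a b := by simp; module
  map_smul' c a := by simp; module

/-- `R` is Jacobi-Tsankov: Jacobi operators of orthogonal vectors commute. -/
def JacobiTsankov (R : V →ₗ[ℝ] V →ₗ[ℝ] V →ₗ[ℝ] V) : Prop :=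
  ∀ x y : V, ⟪x, y⟫_ℝ = 0 → Jacobi R x ∘ₗ Jacobi R y = Jacobi R y ∘ₗ Jacobi R x

/-- The curvature operator `R_Θ(x,y)z = ⟪Θy,z⟪Θx - ⟪Θx,z⟪Θy - 2⟪Θx,y⟪Θz`
associated to an endomorphism `Θ`. -/
def thetaCurvOp (Θ : V →ₗ[ℝ] V) : V →ₗ[ℝ] V →ₗ[ℝ] V →ₗ[ℝ] V where
  toFun x :=
  { toFun := fun y =>
    { toFun := fun z => ⟪Θ y, z⟫_ℝ • Θ x - ⟪Θ x, z⟫_ℝ • Θ y - (2 * ⟪Θ x, y⟫_ℝ) • Θ z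
      map_add' := by intros; simp [inner_add_left, inner_add_right]; module
      map_smul' := by intros; simp [inner_smul_left, inner_smul_right]; module }
    map_add' := by intros; ext z; simp [inner_add_left, inner_add_right]; module
    map_smul' := by intros; ext z; simp [inner_smul_left, inner_smul_right]; module }
  map_add' := by intros; ext y z; simp [inner_add_left]; module
  map_smul' := by intros; ext y z; simp [inner_smul_left]; module

theorem stmt3 (Θ : V →ₗ[ℝ] V) (h2 : Θ ∘ₗ Θ = -LinearMap.id)
    (hskew : ∀ u v : V, ⟪Θ u, v⟫_ℝ = -⟪u, Θ v⟫_ℝ) :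
    JacobiTsankov (thetaCurvOp Θ) := by
  have hΘΘ : ∀ u : V, Θ (Θ u) = -u := by
    intro u
    have := LinearMap.ext_iff.mp h2 u
    simpa using this
  have hzero : ∀ u : V, ⟪Θ u, u⟫_ℝ = 0 := by
    intro u
    have h1 := hskew u u
    have h2' : ⟪u, Θ u⟫_ℝ = ⟪Θ u, u⟫_ℝ := real_inner_comm _ _
    linarith [h1, h2']
  have key : ∀ x y : V, ⟪x, y⟫_ℝ = 0 →
      (Jacobi (thetaCurvOp Θ) x ∘ₗ Jacobi (thetaCurvOp Θ) y) = 0 := by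
    intro x y hxy
    ext z
    have hΘyx : ⟪Θ y, Θ x⟫_ℝ = 0 := by
      have := hskew y (Θ x)
      rw [hΘΘ] at this
      rw [this, inner_neg_right, real_inner_comm, hxy]
      simp
    simp only [LinearMap.comp_apply, Jacobi, thetaCurvOp, LinearMap.coe_mk, AddHom.coe_mk,
      LinearMap.zero_apply]
    rw [hzero x, hzero y]
    simp only [zero_smul, map_sub, map_smul, inner_sub_left, inner_smul_left,
      inner_sub_right, inner_smul_right, hΘyx, zero_sub, smul_neg, mul_zero,
      map_neg, hΘΘ, inner_neg_left]
    have hyx : ⟪y, x⟫_ℝ = (0:ℝ) := by rw [real_inner_comm]; exact hxy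
    simp [hyx]
  intro x y hxy
  rw [key x y hxy, key y x (by rw [real_inner_comm]; exact hxy)]
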